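/- arXiv:2010.06154 — 2 statements merged into one kernel-verified Lean document; each statement's English description precedes it below -/
import Mathlib

section
/- Let x be a test point and x' a point at Euclidean distance D from x in R^{n_2}, with n_2 ≥ 2. If v is a uniformly random unit vector in R^{n_2} and τ = o(D), then the probability that the ray {x + tv : t ≥ 0} passes within distance τ of x' is at most (c·τ/D)^{n_2 − 1} for an absolute constant c > 0. -/
open MeasureTheory Metric
open scoped ENNReal
open scoped Pointwise RealInnerProductSpace

lemma cylinder_volume (m : ℕ) (u : EuclideanSpace ℝ (Fin (m + 1))) (hu : ‖u‖ = 1)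
    {p q b : ℝ} (hpq : p ≤ q) (hb : 0 ≤ b) :
    volume {w : EuclideanSpace ℝ (Fin (m + 1)) |
        ⟪u, w⟫ ∈ Set.Icc p q ∧ ‖w - ⟪u, w⟫ • u‖ ≤ b}
      = ENNReal.ofReal (q - p) * volume (closedBall (0 : EuclideanSpace ℝ (Fin m)) b) := by
  classical
  -- an orthonormal basis whose first vector is `u`
  have hcard : Module.finrank ℝ (EuclideanSpace ℝ (Fin (m + 1))) = Fintype.card (Fin (m + 1)) := by
    simp [finrank_euclideanSpace_fin]
  have horth : Orthonormal ℝ (({0} : Set (Fin (m + 1))).restrict (fun _ => u)) := by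
    constructor
    · intro i; exact hu
    · intro i j hij
      exact absurd (Subtype.ext (by
        have hi := i.2; have hj := j.2
        simp only [Set.mem_singleton_iff] at hi hj
        rw [hi, hj])) hij
  obtain ⟨B, hB⟩ := horth.exists_orthonormalBasis_extension_of_card_eq hcard
  have hB0 : B 0 = u := hB 0 rfl
  have hrepr : ∀ w : EuclideanSpace ℝ (Fin (m + 1)), B.repr w 0 = ⟪u, w⟫ := by
    intro w; rw [B.repr_apply_apply, hB0]
  have hrepru : B.repr u = EuclideanSpace.single 0 1 := by
    rw [← hB0]; exact B.repr_self 0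
  -- the target set in the standard coordinates
  set T : Set (Fin m → ℝ) := {z | ∑ i, z i ^ 2 ≤ b ^ 2} with hT
  have hTsum : Measurable fun z : Fin m → ℝ => ∑ i, z i ^ 2 :=
    Finset.measurable_sum _ fun i _ => (measurable_pi_apply i).pow_const 2
  have hTmeas : MeasurableSet T := hTsum measurableSet_Iic
  set S₂ : Set (Fin (m + 1) → ℝ) :=
    {y | y 0 ∈ Set.Icc p q ∧ ∑ i : Fin m, y i.succ ^ 2 ≤ b ^ 2} with hS₂
  have hS₂sum : Measurable fun y : Fin (m + 1) → ℝ => ∑ i : Fin m, y i.succ ^ 2 :=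
    Finset.measurable_sum _ fun (i : Fin m) _ => (measurable_pi_apply i.succ).pow_const 2
  have hS₂meas : MeasurableSet S₂ :=
    ((measurable_pi_apply (0 : Fin (m + 1))) measurableSet_Icc).inter
      (hS₂sum measurableSet_Iic)
  set S₁ : Set (EuclideanSpace ℝ (Fin (m + 1))) :=
    {y | y 0 ∈ Set.Icc p q ∧ ‖y - y 0 • EuclideanSpace.single 0 1‖ ≤ b} with hS₁
  -- Step 1 : reduce to `S₁` using the isometry `B.repr`
  have step1 : {w : EuclideanSpace ℝ (Fin (m + 1)) |
      ⟪u, w⟫ ∈ Set.Icc p q ∧ ‖w - ⟪u, w⟫ • u‖ ≤ b} = B.repr ⁻¹' S₁ := by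
    ext w
    simp only [Set.mem_setOf_eq, Set.mem_preimage, hS₁, hrepr w]
    constructor
    · rintro ⟨h1, h2⟩
      refine ⟨h1, ?_⟩
      rw [← hrepru, ← LinearIsometryEquiv.map_smul, ← LinearIsometryEquiv.map_sub,
        LinearIsometryEquiv.norm_map]
      exact h2
    · rintro ⟨h1, h2⟩
      refine ⟨h1, ?_⟩
      rwa [← hrepru, ← LinearIsometryEquiv.map_smul, ← LinearIsometryEquiv.map_sub,
        LinearIsometryEquiv.norm_map] at h2
  -- Step 2 : `S₁` is the preimage of `S₂` under the euclidean measurable equivalence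
  have step2 : S₁ = ((MeasurableEquiv.toLp 2 (Fin (m + 1) → ℝ)).symm) ⁻¹' S₂ := by
    ext y
    simp only [hS₁, hS₂, Set.mem_setOf_eq, Set.mem_preimage,
      MeasurableEquiv.coe_toLp_symm]
    have happ : ∀ j, (WithLp.equiv 2 (Fin (m + 1) → ℝ) y) j = y j := fun j => rfl
    have hnorm : ‖y - y 0 • EuclideanSpace.single 0 1‖ ≤ b ↔
        ∑ i : Fin m, y i.succ ^ 2 ≤ b ^ 2 := by
      rw [EuclideanSpace.norm_eq, Real.sqrt_le_iff]
      rw [Fin.sum_univ_succ]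
      simp only [PiLp.sub_apply, PiLp.smul_apply, EuclideanSpace.single_apply,
        Fin.succ_ne_zero, if_true, if_false, Real.norm_eq_abs, sq_abs,
        smul_eq_mul, mul_one, mul_zero, sub_self, sub_zero, if_pos rfl, abs_zero]
      constructor
      · rintro ⟨-, h⟩; simpa using h
      · intro h; refine ⟨hb, by simpa using h⟩
    rw [hnorm]
  -- Step 3 : compute the volume of `S₂` by splitting off the first coordinate
  have step3 : volume S₂ = ENNReal.ofReal (q - p) * volume T := by
    have hψ := MeasureTheory.volume_preserving_piFinSuccAbove (fun _ : Fin (m + 1) => ℝ) 0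
    have hpre : S₂ = (MeasurableEquiv.piFinSuccAbove (fun _ : Fin (m + 1) => ℝ) 0) ⁻¹'
        (Set.Icc p q ×ˢ T) := by
      ext y
      simp only [hS₂, Set.mem_setOf_eq, Set.mem_preimage, Set.mem_prod,
        MeasurableEquiv.piFinSuccAbove_apply, hT]
      tauto
    rw [hpre, hψ.measure_preimage ((measurableSet_Icc.prod hTmeas)).nullMeasurableSet,
      Measure.volume_eq_prod, Measure.prod_prod, Real.volume_Icc]
  -- Step 4 : the volume of `T` is the volume of the euclidean ball
  have step4 : volume T = volume (closedBall (0 : EuclideanSpace ℝ (Fin m)) b) := by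
    have hχ := EuclideanSpace.volume_preserving_symm_measurableEquiv_toLp (Fin m)
    have hpre : closedBall (0 : EuclideanSpace ℝ (Fin m)) b =
        ((MeasurableEquiv.toLp 2 (Fin m → ℝ)).symm) ⁻¹' T := by
      ext z
      simp only [Metric.mem_closedBall, dist_zero_right, Set.mem_preimage,
        MeasurableEquiv.coe_toLp_symm, hT, Set.mem_setOf_eq]
      rw [EuclideanSpace.norm_eq, Real.sqrt_le_iff]
      have : ∀ i, (WithLp.equiv 2 (Fin m → ℝ) z) i = z i := fun _ => rfl
      simp only [Real.norm_eq_abs, sq_abs, this]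
      constructor
      · rintro ⟨-, h⟩; exact h
      · intro h; exact ⟨hb, h⟩
    rw [hpre, hχ.measure_preimage hTmeas.nullMeasurableSet]
  rw [step1, (B.measurePreserving_repr).measure_preimage, step2,
    (EuclideanSpace.volume_preserving_symm_measurableEquiv_toLp (Fin (m + 1))).measure_preimage
      hS₂meas.nullMeasurableSet, step3, step4]
  · rw [step2]
    exact (((MeasurableEquiv.toLp 2 (Fin (m + 1) → ℝ)).symm).measurable hS₂meas).nullMeasurableSet

/-- Cone (surface) measure on the unit sphere of `ℝ^n`; normalized it gives the uniform
distribution of a random unit direction. -/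
noncomputable def coneMeasure (n : ℕ) (A : Set (EuclideanSpace ℝ (Fin n))) : ℝ≥0∞ :=
  n * volume {x : EuclideanSpace ℝ (Fin n) | x ∈ ball 0 1 ∧ x ≠ 0 ∧ (‖x‖⁻¹ • x) ∈ A}

set_option maxHeartbeats 1000000 in
/-- There is an absolute constant `c > 0` such that for points `x, x'` at distance `D` in
`ℝ^{n₂}` (`n₂ ≥ 2`) and `τ = o(D)` (formalized as `τ ≤ D/2`), the probability that the ray
from `x` in a uniformly random direction `v` passes within distance `τ` of `x'` is at most
`(c τ / D)^{n₂ - 1}`. -/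
theorem random_ray_hits_ball_prob :
    ∃ c : ℝ, 0 < c ∧ ∀ (n₂ : ℕ), 2 ≤ n₂ →
      ∀ (x x' : EuclideanSpace ℝ (Fin n₂)) (τ D : ℝ), 0 < τ → τ ≤ D / 2 →
        dist x x' = D →
        coneMeasure n₂ {v : EuclideanSpace ℝ (Fin n₂) |
            ∃ t : ℝ, 0 ≤ t ∧ dist (x + t • v) x' ≤ τ} ≤
          ENNReal.ofReal ((c * τ / D) ^ (n₂ - 1)) * coneMeasure n₂ Set.univ := by
  refine ⟨8, by norm_num, ?_⟩
  intro n₂ hn₂ x x' τ D hτ hτD hdist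
  obtain ⟨m, rfl⟩ : ∃ m, n₂ = m + 1 := ⟨n₂ - 1, by omega⟩
  have hm : 1 ≤ m := by omega
  have hD : 0 < D := by linarith
  have hxx : ‖x' - x‖ = D := by rw [← dist_eq_norm, dist_comm]; exact hdist
  set u : EuclideanSpace ℝ (Fin (m + 1)) := D⁻¹ • (x' - x) with hu_def
  have hu : ‖u‖ = 1 := by
    rw [hu_def, norm_smul, hxx, Real.norm_eq_abs, abs_of_pos (inv_pos.mpr hD)]
    field_simp
  have huu : ⟪u, u⟫ = 1 := by rw [real_inner_self_eq_norm_sq, hu]; norm_num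
  set r : ℝ := 2 * τ / D with hr
  have hr0 : 0 < r := by positivity
  have hr1 : r ≤ 1 := by rw [hr, div_le_one hD]; linarith
  -- the cone set is contained in a thin cylinder
  have hsub : {w : EuclideanSpace ℝ (Fin (m + 1)) | w ∈ ball 0 1 ∧ w ≠ 0 ∧
      (‖w‖⁻¹ • w) ∈ {v : EuclideanSpace ℝ (Fin (m + 1)) |
        ∃ t : ℝ, 0 ≤ t ∧ dist (x + t • v) x' ≤ τ}} ⊆
      {w : EuclideanSpace ℝ (Fin (m + 1)) |
        ⟪u, w⟫ ∈ Set.Icc (-1 : ℝ) 2 ∧ ‖w - ⟪u, w⟫ • u‖ ≤ r} := by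
    rintro w ⟨hwball, hw0, t, ht, hdist'⟩
    set v : EuclideanSpace ℝ (Fin (m + 1)) := ‖w‖⁻¹ • w with hv_def
    have hwn : ‖w‖ ≠ 0 := norm_ne_zero_iff.mpr hw0
    have hwlt : ‖w‖ < 1 := by rwa [mem_ball_zero_iff] at hwball
    have hv1 : ‖v‖ = 1 := by
      rw [hv_def, norm_smul, Real.norm_eq_abs, abs_of_nonneg (by positivity)]
      field_simp
    have h1 : ‖t • v - (x' - x)‖ ≤ τ := by
      have he : x + t • v - x' = t • v - (x' - x) := by abel
      rw [dist_eq_norm, he] at hdist'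
      exact hdist'
    have htv : ‖t • v‖ = t := by
      rw [norm_smul, hv1, mul_one, Real.norm_eq_abs, abs_of_nonneg ht]
    have h2 : |t - D| ≤ τ := by
      have h := abs_norm_sub_norm_le (t • v) (x' - x)
      rw [htv, hxx] at h
      exact h.trans h1
    have h3 : ‖D • v - (x' - x)‖ ≤ 2 * τ := by
      have he : D • v - (x' - x) = (D - t) • v + (t • v - (x' - x)) := by
        rw [sub_smul]; abel
      calc ‖D • v - (x' - x)‖ ≤ ‖(D - t) • v‖ + ‖t • v - (x' - x)‖ := by
            rw [he]; exact norm_add_le _ _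
        _ ≤ τ + τ := by
            refine add_le_add ?_ h1
            rw [norm_smul, hv1, mul_one, Real.norm_eq_abs, abs_sub_comm]
            exact h2
        _ = 2 * τ := by ring
    have hvu : ‖v - u‖ ≤ r := by
      have he : v - u = D⁻¹ • (D • v - (x' - x)) := by
        rw [smul_sub D⁻¹ (D • v) (x' - x), inv_smul_smul₀ hD.ne', hu_def]
      rw [he, norm_smul, Real.norm_eq_abs, abs_of_pos (inv_pos.mpr hD)]
      calc D⁻¹ * ‖D • v - (x' - x)‖ ≤ D⁻¹ * (2 * τ) := by
            exact mul_le_mul_of_nonneg_left h3 (by positivity)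
        _ = r := by rw [hr]; field_simp
    have hw_eq : w = ‖w‖ • v := by rw [hv_def, smul_inv_smul₀ hwn]
    set a : ℝ := ⟪u, w⟫ with ha
    have hperp1 : ‖w - ‖w‖ • u‖ ≤ r := by
      have he : w - ‖w‖ • u = ‖w‖ • (v - u) := by rw [smul_sub, ← hw_eq]
      rw [he, norm_smul, Real.norm_eq_abs, abs_of_nonneg (norm_nonneg w)]
      calc ‖w‖ * ‖v - u‖ ≤ 1 * r :=
            mul_le_mul hwlt.le hvu (norm_nonneg _) zero_le_one
        _ = r := one_mul r
    have hinwu : ⟪w, u⟫ = a := by rw [real_inner_comm]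
    have e1 : ‖w - a • u‖ ^ 2 = ‖w‖ ^ 2 - 2 * (a * a) + a ^ 2 := by
      rw [norm_sub_sq_real, real_inner_smul_right, hinwu, norm_smul, Real.norm_eq_abs, hu,
        mul_one, sq_abs]
    have e2 : ‖w - ‖w‖ • u‖ ^ 2 = ‖w‖ ^ 2 - 2 * (‖w‖ * a) + ‖w‖ ^ 2 := by
      rw [norm_sub_sq_real, real_inner_smul_right, hinwu, norm_smul, Real.norm_eq_abs, hu,
        mul_one, sq_abs]
    have hsq : ‖w - a • u‖ ^ 2 ≤ ‖w - ‖w‖ • u‖ ^ 2 := by nlinarith [sq_nonneg (‖w‖ - a)]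
    have hmin : ‖w - a • u‖ ≤ ‖w - ‖w‖ • u‖ := by
      calc ‖w - a • u‖ = Real.sqrt (‖w - a • u‖ ^ 2) := (Real.sqrt_sq (norm_nonneg _)).symm
        _ ≤ Real.sqrt (‖w - ‖w‖ • u‖ ^ 2) := Real.sqrt_le_sqrt hsq
        _ = ‖w - ‖w‖ • u‖ := Real.sqrt_sq (norm_nonneg _)
    have hperp : ‖w - a • u‖ ≤ r := hmin.trans hperp1
    have hanorm : |a - ‖w‖| ≤ r := by
      have he : a - ‖w‖ = ⟪u, w - ‖w‖ • u⟫ := by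
        rw [inner_sub_right, real_inner_smul_right, huu, mul_one]
      rw [he]
      calc |⟪u, w - ‖w‖ • u⟫| ≤ ‖u‖ * ‖w - ‖w‖ • u‖ := abs_real_inner_le_norm _ _
        _ ≤ 1 * r := by rw [hu]; exact mul_le_mul_of_nonneg_left hperp1 zero_le_one
        _ = r := one_mul r
    have habs := abs_le.mp hanorm
    have h0w : 0 ≤ ‖w‖ := norm_nonneg w
    exact ⟨⟨by linarith, by linarith⟩, hperp⟩
  -- a fat cylinder is contained in the closed unit ball
  have hsub2 : {w : EuclideanSpace ℝ (Fin (m + 1)) |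
      ⟪u, w⟫ ∈ Set.Icc (-(Real.sqrt 3 / 2)) (Real.sqrt 3 / 2) ∧
        ‖w - ⟪u, w⟫ • u‖ ≤ 1 / 2} ⊆ closedBall (0 : EuclideanSpace ℝ (Fin (m + 1))) 1 := by
    rintro w ⟨⟨h1, h2⟩, h3⟩
    set a : ℝ := ⟪u, w⟫ with ha
    have hinwu : ⟪w, u⟫ = a := by rw [real_inner_comm]
    have e1 : ‖w - a • u‖ ^ 2 = ‖w‖ ^ 2 - 2 * (a * a) + a ^ 2 := by
      rw [norm_sub_sq_real, real_inner_smul_right, hinwu, norm_smul, Real.norm_eq_abs, hu,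
        mul_one, sq_abs]
    have hs3 : Real.sqrt 3 ^ 2 = 3 := Real.sq_sqrt (by norm_num)
    have haabs : |a| ≤ Real.sqrt 3 / 2 := abs_le.mpr ⟨h1, h2⟩
    have ha2 : a ^ 2 ≤ 3 / 4 := by
      calc a ^ 2 = |a| ^ 2 := (sq_abs a).symm
        _ ≤ (Real.sqrt 3 / 2) ^ 2 := pow_le_pow_left₀ (abs_nonneg a) haabs 2
        _ = 3 / 4 := by rw [div_pow, hs3]; norm_num
    have hperpsq : ‖w - a • u‖ ^ 2 ≤ 1 / 4 := by
      calc ‖w - a • u‖ ^ 2 ≤ (1 / 2) ^ 2 := pow_le_pow_left₀ (norm_nonneg _) h3 2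
        _ = 1 / 4 := by norm_num
    have hw2 : ‖w‖ ^ 2 ≤ 1 := by nlinarith [e1]
    rw [mem_closedBall_zero_iff]
    nlinarith [norm_nonneg w, hw2]
  -- volume identities
  have hvol1 := cylinder_volume m u hu (p := (-1 : ℝ)) (q := 2) (by norm_num) hr0.le
  have hvol2 := cylinder_volume m u hu (p := -(Real.sqrt 3 / 2)) (q := Real.sqrt 3 / 2)
    (b := 1 / 2) (by have := Real.sqrt_nonneg 3; linarith) (by norm_num)
  -- nontriviality
  have hnt : (EuclideanSpace.single (0 : Fin (m + 1)) (1 : ℝ)) ≠ 0 := by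
    intro h
    have h1 : ‖EuclideanSpace.single (0 : Fin (m + 1)) (1 : ℝ)‖ = 1 := by
      rw [EuclideanSpace.norm_single]; norm_num
    rw [h, norm_zero] at h1
    exact one_ne_zero h1.symm
  haveI : Nontrivial (EuclideanSpace ℝ (Fin (m + 1))) := ⟨⟨_, 0, hnt⟩⟩
  have hconeU : coneMeasure (m + 1) (Set.univ : Set (EuclideanSpace ℝ (Fin (m + 1)))) =
      ((m + 1 : ℕ) : ℝ≥0∞) * volume (ball (0 : EuclideanSpace ℝ (Fin (m + 1))) 1) := by
    rw [coneMeasure]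
    have hset : {w : EuclideanSpace ℝ (Fin (m + 1)) | w ∈ ball 0 1 ∧ w ≠ 0 ∧
        (‖w‖⁻¹ • w) ∈ (Set.univ : Set (EuclideanSpace ℝ (Fin (m + 1))))} = ball 0 1 \ {0} := by
      ext w
      simp only [Set.mem_setOf_eq, Set.mem_univ, and_true, Set.mem_diff,
        Set.mem_singleton_iff]
    rw [hset, measure_diff_null (measure_singleton 0)]
  have hballvol : volume (ball (0 : EuclideanSpace ℝ (Fin (m + 1))) 1) =
      volume (closedBall (0 : EuclideanSpace ℝ (Fin (m + 1))) 1) :=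
    (Measure.addHaar_closedBall_eq_addHaar_ball _ _ _).symm
  set β := volume (closedBall (0 : EuclideanSpace ℝ (Fin m)) (1 / 2)) with hβ
  have hscale : volume (closedBall (0 : EuclideanSpace ℝ (Fin m)) r)
      = ENNReal.ofReal ((2 * r) ^ m) * β := by
    have h2r : (0 : ℝ) < 2 * r := by linarith
    have hsm : (2 * r) • closedBall (0 : EuclideanSpace ℝ (Fin m)) (1 / 2) = closedBall 0 r := by
      rw [smul_closedBall _ _ (by norm_num : (0 : ℝ) ≤ 1 / 2), smul_zero, Real.norm_eq_abs,
        abs_of_pos h2r]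
      congr 1
      ring
    rw [← hsm, Measure.addHaar_smul_of_nonneg volume h2r.le, finrank_euclideanSpace_fin]
  have hkey : ENNReal.ofReal (2 - (-1) : ℝ) * (ENNReal.ofReal ((2 * r) ^ m) * β)
      ≤ ENNReal.ofReal ((8 * τ / D) ^ (m + 1 - 1)) *
        (ENNReal.ofReal (Real.sqrt 3 / 2 - -(Real.sqrt 3 / 2)) * β) := by
    rw [← mul_assoc, ← mul_assoc, ← ENNReal.ofReal_mul (by norm_num),
      ← ENNReal.ofReal_mul (by positivity)]
    refine mul_le_mul_left (ENNReal.ofReal_le_ofReal ?_) β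
    have hs3 : Real.sqrt 3 ^ 2 = 3 := Real.sq_sqrt (by norm_num)
    have h32 : (3 : ℝ) / 2 ≤ Real.sqrt 3 := by
      nlinarith [Real.sqrt_nonneg 3]
    have h2m : (2 : ℝ) ≤ 2 ^ m := by
      calc (2 : ℝ) = 2 ^ 1 := (pow_one 2).symm
        _ ≤ 2 ^ m := pow_le_pow_right₀ one_le_two hm
    have hsimp : (8 * τ / D) = 2 * (2 * r) := by rw [hr]; ring
    have hmm : m + 1 - 1 = m := by omega
    rw [hmm]
    calc (2 - (-1) : ℝ) * (2 * r) ^ m = 3 * (2 * r) ^ m := by norm_num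
      _ ≤ (Real.sqrt 3 * 2 ^ m) * (2 * r) ^ m := by
          refine mul_le_mul_of_nonneg_right ?_ (by positivity)
          nlinarith
      _ = (2 ^ m * (2 * r) ^ m) * Real.sqrt 3 := by ring
      _ = (2 * (2 * r)) ^ m * Real.sqrt 3 := by rw [mul_pow 2 (2 * r) m]
      _ = (2 * (2 * r)) ^ m * (Real.sqrt 3 / 2 - -(Real.sqrt 3 / 2)) := by
          congr 1
          ring
      _ = (8 * τ / D) ^ m * (Real.sqrt 3 / 2 - -(Real.sqrt 3 / 2)) := by rw [← hsimp]
  calc coneMeasure (m + 1) {v : EuclideanSpace ℝ (Fin (m + 1)) |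
          ∃ t : ℝ, 0 ≤ t ∧ dist (x + t • v) x' ≤ τ}
      ≤ ((m + 1 : ℕ) : ℝ≥0∞) * volume {w : EuclideanSpace ℝ (Fin (m + 1)) |
          ⟪u, w⟫ ∈ Set.Icc (-1 : ℝ) 2 ∧ ‖w - ⟪u, w⟫ • u‖ ≤ r} := by
        rw [coneMeasure]
        push_cast
        exact mul_le_mul_right (measure_mono hsub) _
    _ = ((m + 1 : ℕ) : ℝ≥0∞) *
          (ENNReal.ofReal (2 - (-1)) * (ENNReal.ofReal ((2 * r) ^ m) * β)) := by
        rw [hvol1, hscale]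
    _ ≤ ((m + 1 : ℕ) : ℝ≥0∞) * (ENNReal.ofReal ((8 * τ / D) ^ (m + 1 - 1)) *
          (ENNReal.ofReal (Real.sqrt 3 / 2 - -(Real.sqrt 3 / 2)) * β)) :=
        mul_le_mul_right hkey _
    _ = ENNReal.ofReal ((8 * τ / D) ^ (m + 1 - 1)) * (((m + 1 : ℕ) : ℝ≥0∞) *
          volume {w : EuclideanSpace ℝ (Fin (m + 1)) |
            ⟪u, w⟫ ∈ Set.Icc (-(Real.sqrt 3 / 2)) (Real.sqrt 3 / 2) ∧
              ‖w - ⟪u, w⟫ • u‖ ≤ 1 / 2}) := by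
        rw [hvol2]
        ring
    _ ≤ ENNReal.ofReal ((8 * τ / D) ^ (m + 1 - 1)) *
          coneMeasure (m + 1) Set.univ := by
        refine mul_le_mul_right ?_ _
        rw [hconeU, hballvol]
        exact mul_le_mul_right ((measure_mono hsub2).trans le_rfl) _
end

section
/- In the two-cluster example where class A is uniform on the segment [0, D] × {0} ⊂ R², with m i.i.d. training samples from class A, the probability that a fresh test point x ∈ [0, D] × {0} has no training point within distance τ ≤ D is, averaged over x, equal to (1/(m+1)) · [ 2(1 − τ/D)^{m+1} + (m−1) · 1_{τ ≤ D/2} · (1 − 2τ/D)^{m+1} ]. -/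
open MeasureTheory intervalIntegral

lemma key1 (D c : ℝ) (hD : D ≠ 0) (m : ℕ) (a b : ℝ) :
    ∫ x in a..b, ((x - c)/D)^m
      = (((b-c)/D)^(m+1) - ((a-c)/D)^(m+1)) * (D/((m:ℝ)+1)) := by
  have hm1 : ((m:ℝ)+1) ≠ 0 := by positivity
  have h : ∀ x : ℝ, HasDerivAt (fun x => ((x - c)/D)^(m+1) * (D/((m:ℝ)+1)))
      (((x - c)/D)^m) x := by
    intro x
    have h1 : HasDerivAt (fun x : ℝ => (x - c)/D) (1/D) x :=
      ((hasDerivAt_id x).sub_const c).div_const D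
    have h3 := (h1.pow (m+1)).mul_const (D/((m:ℝ)+1))
    refine h3.congr_deriv ?_
    push_cast
    field_simp
  rw [intervalIntegral.integral_eq_sub_of_hasDerivAt (fun x _ => h x)
      ((Continuous.intervalIntegrable (by continuity) a b))]
  ring

lemma key2 (D c : ℝ) (hD : D ≠ 0) (m : ℕ) (a b : ℝ) :
    ∫ x in a..b, ((c - x)/D)^m
      = (((c-a)/D)^(m+1) - ((c-b)/D)^(m+1)) * (D/((m:ℝ)+1)) := by
  have hm1 : ((m:ℝ)+1) ≠ 0 := by positivity
  have h : ∀ x : ℝ, HasDerivAt (fun x => -(((c - x)/D)^(m+1) * (D/((m:ℝ)+1))))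
      (((c - x)/D)^m) x := by
    intro x
    have h1 : HasDerivAt (fun x : ℝ => (c - x)/D) (-1/D) x :=
      ((hasDerivAt_id x).const_sub c).div_const D
    have h3 := ((h1.pow (m+1)).mul_const (D/((m:ℝ)+1))).neg
    refine h3.congr_deriv ?_
    push_cast
    field_simp
  rw [intervalIntegral.integral_eq_sub_of_hasDerivAt (fun x _ => h x)
      ((Continuous.intervalIntegrable (by continuity) a b))]
  ring

/-- Exact abstention rate in the one-dimensional cluster example: for a test point `x`
uniform on `[0, D]` and `m` i.i.d. uniform training points, the probability that no
training point is within distance `τ ≤ D` of `x`, averaged over `x`, equals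
`(1/(m+1)) [2(1-τ/D)^{m+1} + (m-1) 1_{τ ≤ D/2} (1-2τ/D)^{m+1}]`.  The neighborhood of `x`
inside the segment has length `min(x+τ, D) - max(x-τ, 0)`. -/
theorem abstention_rate_two_cluster (D τ : ℝ) (m : ℕ)
    (hD : 0 < D) (hτ : 0 < τ) (hτD : τ ≤ D) (hm : 1 ≤ m) :
    (1 / D) * ∫ x in (0 : ℝ)..D, (1 - (min (x + τ) D - max (x - τ) 0) / D) ^ m =
      (1 / ((m : ℝ) + 1)) * (2 * (1 - τ / D) ^ (m + 1) +
        ((m : ℝ) - 1) * (if τ ≤ D / 2 then (1 - 2 * τ / D) ^ (m + 1) else 0)) := by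
  have hD' : D ≠ 0 := ne_of_gt hD
  have hm1 : ((m:ℝ)+1) ≠ 0 := by positivity
  set f : ℝ → ℝ := fun x => (1 - (min (x + τ) D - max (x - τ) 0) / D) ^ m with hf
  have hfc : Continuous f := by fun_prop
  have hint : ∀ a b : ℝ, IntervalIntegrable f volume a b :=
    fun a b => hfc.intervalIntegrable a b
  by_cases hcase : τ ≤ D / 2
  · -- split at τ and D - τ
    have hτDτ : τ ≤ D - τ := by linarith
    have hsplit : ∫ x in (0:ℝ)..D, f x =
        (∫ x in (0:ℝ)..τ, f x) + (∫ x in τ..(D-τ), f x) + (∫ x in (D-τ)..D, f x) := by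
      rw [integral_add_adjacent_intervals (hint 0 τ) (hint τ (D-τ)),
        integral_add_adjacent_intervals (hint 0 (D-τ)) (hint (D-τ) D)]
    have h1 : ∫ x in (0:ℝ)..τ, f x = ∫ x in (0:ℝ)..τ, ((D - τ - x)/D)^m := by
      apply intervalIntegral.integral_congr
      intro x hx
      rw [Set.uIcc_of_le (le_of_lt hτ)] at hx
      obtain ⟨hx0, hx1⟩ := hx
      have : min (x + τ) D = x + τ := min_eq_left (by linarith)
      have h2' : max (x - τ) 0 = 0 := max_eq_right (by linarith)
      simp only [hf, this, h2']
      congr 1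
      field_simp
      try ring
    have h2 : ∫ x in τ..(D-τ), f x = (D - τ - τ) * (1 - 2*τ/D)^m := by
      rw [show (D - τ - τ) * (1 - 2*τ/D)^m = ∫ x in τ..(D-τ), (1 - 2*τ/D)^m by
        simp [intervalIntegral.integral_const, smul_eq_mul]; try ring]
      apply intervalIntegral.integral_congr
      intro x hx
      rw [Set.uIcc_of_le hτDτ] at hx
      obtain ⟨hx0, hx1⟩ := hx
      have h1' : min (x + τ) D = x + τ := min_eq_left (by linarith)
      have h2' : max (x - τ) 0 = x - τ := max_eq_left (by linarith)
      simp only [hf, h1', h2']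
      congr 1
      field_simp
      try ring
    have h3 : ∫ x in (D-τ)..D, f x = ∫ x in (D-τ)..D, ((x - τ)/D)^m := by
      apply intervalIntegral.integral_congr
      intro x hx
      rw [Set.uIcc_of_le (by linarith : D - τ ≤ D)] at hx
      obtain ⟨hx0, hx1⟩ := hx
      have h1' : min (x + τ) D = D := min_eq_right (by linarith)
      have h2' : max (x - τ) 0 = x - τ := max_eq_left (by linarith)
      simp only [hf, h1', h2']
      congr 1
      field_simp
      try ring
    rw [hsplit, h1, h2, h3, if_pos hcase]
    rw [key2 D (D - τ) hD' m 0 τ, key1 D τ hD' m (D-τ) D]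
    have e1 : (D - τ - 0)/D = 1 - τ/D := by field_simp; ring
    have e2 : (D - τ - τ)/D = 1 - 2*τ/D := by field_simp; ring
    have e3 : (D - τ)/D = 1 - τ/D := by field_simp
    have e4 : D - τ - τ = D * (1 - 2*τ/D) := by field_simp; ring
    rw [e1, e2, e3, e4]
    field_simp
    rw [pow_succ _ m, pow_succ _ m]
    field_simp
    ring
  · push_neg at hcase
    have hDττ : D - τ ≤ τ := by linarith
    have hsplit : ∫ x in (0:ℝ)..D, f x =
        (∫ x in (0:ℝ)..(D-τ), f x) + (∫ x in (D-τ)..τ, f x) + (∫ x in τ..D, f x) := by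
      rw [integral_add_adjacent_intervals (hint 0 (D-τ)) (hint (D-τ) τ),
        integral_add_adjacent_intervals (hint 0 τ) (hint τ D)]
    have h1 : ∫ x in (0:ℝ)..(D-τ), f x = ∫ x in (0:ℝ)..(D-τ), (((D - τ) - x)/D)^m := by
      apply intervalIntegral.integral_congr
      intro x hx
      rw [Set.uIcc_of_le (by linarith : (0:ℝ) ≤ D - τ)] at hx
      obtain ⟨hx0, hx1⟩ := hx
      have h1' : min (x + τ) D = x + τ := min_eq_left (by linarith)
      have h2' : max (x - τ) 0 = 0 := max_eq_right (by linarith)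
      simp only [hf, h1', h2']
      congr 1
      field_simp
      try ring
    have h2 : ∫ x in (D-τ)..τ, f x = 0 := by
      rw [show (0:ℝ) = ∫ x in (D-τ)..τ, (0:ℝ) by simp]
      apply intervalIntegral.integral_congr
      intro x hx
      rw [Set.uIcc_of_le hDττ] at hx
      obtain ⟨hx0, hx1⟩ := hx
      have h1' : min (x + τ) D = D := min_eq_right (by linarith)
      have h2' : max (x - τ) 0 = 0 := max_eq_right (by linarith)
      simp only [hf, h1', h2']
      rw [sub_zero, div_self hD', sub_self]
      exact zero_pow (by omega)
    have h3 : ∫ x in τ..D, f x = ∫ x in τ..D, ((x - τ)/D)^m := by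
      apply intervalIntegral.integral_congr
      intro x hx
      rw [Set.uIcc_of_le hτD] at hx
      obtain ⟨hx0, hx1⟩ := hx
      have h1' : min (x + τ) D = D := min_eq_right (by linarith)
      have h2' : max (x - τ) 0 = x - τ := max_eq_left (by linarith)
      simp only [hf, h1', h2']
      congr 1
      field_simp
      try ring
    rw [hsplit, h1, h2, h3, if_neg (not_le.mpr hcase),
      key2 D (D - τ) hD' m 0 (D - τ), key1 D τ hD' m τ D]
    have e1 : (D - τ - 0)/D = 1 - τ/D := by field_simp; ring
    have e3 : (D - τ)/D = 1 - τ/D := by field_simp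
    have e5 : (D - τ - (D - τ))/D = 0 := by simp
    have e6 : (τ - τ)/D = 0 := by simp
    rw [e1, e3, e5, e6, zero_pow (by omega : m + 1 ≠ 0)]
    field_simp
    ring
end
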